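/- Let C̃ be a free differential R-module with a filtration 0 = F_0(C̃) ⊂ F_1(C̃) ⊂ ... ⊂ F_n(C̃) = C̃ by free differential submodules that are R-module direct summands and satisfy d(F_i(C̃)) ⊆ F_{i-1}(C̃), and suppose C̃ has an augmentation ε: C̃ → k (a morphism of differential modules, k with trivial differential) whose restriction to F_1(C̃) is surjective. Equip K_r(0) with the filtration by length of exterior products and the canonical augmentation. Then there exists a morphism of differential R-modules β: C̃ → K_r(0) that commutes with the respective augmentations and preserves the filtrations. -/

import Mathlib

/-!
Statement 15 (Proposition 4.2): let `C̃` be a free differential `R`-module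
(`R = k[t₁,…,t_r]`) with a filtration `0 = F₀ ⊂ F₁ ⊂ … ⊂ F_n = C̃` by free differential
submodules that are `R`-module direct summands and satisfy `d(F_i) ⊆ F_{i-1}` (a free
differential flag), with an augmentation `ε : C̃ → k` (a morphism of differential modules,
`k` with trivial differential, `R` acting through the augmentation `tᵢ ↦ 0`) whose
restriction to `F₁` is surjective.  Equip `K_r(0)` with the filtration by length of
exterior products (`i`-th stage: exterior products of at most `i-1` generators) and the
canonical augmentation `f ↦ constant coefficient of f(∅)`.  Then there is a morphism of
differential `R`-modules `β : C̃ → K_r(0)` commuting with the augmentations and preserving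
the filtrations.  The Koszul complex `K_r(0)` is modelled as in Statement 0.
-/

open MvPolynomial

/-- `R = k[t₁,…,t_r]`. -/
abbrev Rp (k : Type*) [Field k] (r : ℕ) := MvPolynomial (Fin r) k

/-- The underlying `R`-module of the Koszul complex `K_r(m)`. -/
abbrev Kmod (k : Type*) [Field k] (r : ℕ) := Finset (Fin r) → MvPolynomial (Fin r) k

/-- Basis element corresponding to the exterior monomial `⋀_{i ∈ S} sᵢ`. -/
noncomputable def eK (k : Type*) [Field k] {r : ℕ} (S : Finset (Fin r)) : Kmod k r :=
  Pi.single S 1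

/-- The Koszul differential of `K_r(m)`. -/
noncomputable def koszulD (k : Type*) [Field k] (r m : ℕ) :
    Kmod k r →ₗ[MvPolynomial (Fin r) k] Kmod k r :=
  LinearMap.pi fun S => ∑ i ∈ Sᶜ,
    (((-1 : MvPolynomial (Fin r) k) ^ (S.filter (fun j => j < i)).card) * X i ^ (m + 1)) •
      LinearMap.proj (insert i S)

/-- The filtration of `K_r(0)` by length of exterior products: the `i`-th stage is
generated by the exterior products of at most `i-1` of the generators. -/
noncomputable def KFil (k : Type*) [Field k] (r : ℕ) (i : ℕ) : Submodule (Rp k r) (Kmod k r) :=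
  Submodule.span (Rp k r) {f : Kmod k r | ∃ S : Finset (Fin r), S.card + 1 ≤ i ∧ f = eK k S}
section Aux
variable (k : Type*) [Field k] {r : ℕ}

lemma koszulD_apply (f : Kmod k r) (S : Finset (Fin r)) :
    koszulD k r 0 f S = ∑ i ∈ Sᶜ,
      (((-1 : MvPolynomial (Fin r) k) ^ (S.filter (fun j => j < i)).card) * X i) *
        f (insert i S) := by
  simp [koszulD, LinearMap.pi_apply, LinearMap.sum_apply, LinearMap.smul_apply,
    LinearMap.proj_apply, smul_eq_mul]

lemma koszulD_single (T : Finset (Fin r)) (q : MvPolynomial (Fin r) k) :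
    koszulD k r 0 (Pi.single T q) = ∑ i ∈ T, Pi.single (T.erase i)
      ((((-1 : MvPolynomial (Fin r) k) ^ (((T.erase i)).filter (fun j => j < i)).card) * X i) * q) := by
  classical
  funext U
  rw [koszulD_apply]
  have h1 : ∀ i ∈ Uᶜ, (((-1 : MvPolynomial (Fin r) k) ^ (U.filter (fun j => j < i)).card) * X i) *
      (Pi.single T q : Kmod k r) (insert i U)
      = if insert i U = T then (((-1 : MvPolynomial (Fin r) k) ^ (U.filter (fun j => j < i)).card) * X i) * q else 0 := by
    intro i _
    rw [Pi.single_apply]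
    split <;> simp
  rw [Finset.sum_congr rfl h1, ← Finset.sum_filter]
  have h3 : (∑ i ∈ T, Pi.single (T.erase i)
      ((((-1 : MvPolynomial (Fin r) k) ^ (((T.erase i)).filter (fun j => j < i)).card) * X i) * q) : Kmod k r) U
      = ∑ i ∈ T.filter (fun i => U = T.erase i),
        (((-1 : MvPolynomial (Fin r) k) ^ (((T.erase i)).filter (fun j => j < i)).card) * X i) * q := by
    rw [Finset.sum_apply]
    rw [Finset.sum_congr rfl (fun i _ => Pi.single_apply (T.erase i) _ U), ← Finset.sum_filter]
  rw [h3]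
  apply Finset.sum_congr
  · ext i
    simp only [Finset.mem_filter, Finset.mem_compl]
    constructor
    · rintro ⟨hiU, hins⟩
      have hiT : i ∈ T := hins ▸ Finset.mem_insert_self i U
      refine ⟨hiT, ?_⟩
      rw [← hins, Finset.erase_insert hiU]
    · rintro ⟨hiT, hUe⟩
      have hiU : i ∉ U := hUe ▸ Finset.notMem_erase i T
      exact ⟨hiU, by rw [hUe, Finset.insert_erase hiT]⟩
  · intro i hi
    simp only [Finset.mem_filter] at hi
    rw [hi.2]
end Aux
open Finsupp in
/-- "Division by `X m` of the `m`-led part": the contracting-homotopy coefficient map. -/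
noncomputable def divPL (k : Type*) [Field k] {r : ℕ} (m : Fin r) :
    MvPolynomial (Fin r) k →ₗ[k] MvPolynomial (Fin r) k :=
  (Finsupp.lsum k fun a : Fin r →₀ ℕ =>
    if a m ≠ 0 ∧ ∀ j < m, a j = 0 then
      (monomial (a - Finsupp.single m 1) : k →ₗ[k] MvPolynomial (Fin r) k) else 0)
  ∘ₗ (AddMonoidAlgebra.coeffLinearEquiv k).toLinearMap

section Aux2
variable {k : Type*} [Field k] {r : ℕ}

lemma divPL_monomial (m : Fin r) (a : Fin r →₀ ℕ) (c : k) :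
    divPL k m (monomial a c)
      = if a m ≠ 0 ∧ ∀ j < m, a j = 0 then monomial (a - Finsupp.single m 1) c else 0 := by
  classical
  rw [divPL, LinearMap.comp_apply]
  have hc : (AddMonoidAlgebra.coeffLinearEquiv k).toLinearMap (monomial a c) = Finsupp.single a c := by
    ext b; change MvPolynomial.coeff b (monomial a c) = _
    simp [MvPolynomial.coeff_monomial, Finsupp.single_apply]
  rw [hc, Finsupp.lsum_single]
  split <;> simp

/-- The contracting homotopy of the Koszul complex. -/
noncomputable def HK (k : Type*) [Field k] (r : ℕ) : Kmod k r →ₗ[k] Kmod k r :=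
  LinearMap.pi fun T => if hT : T.Nonempty then
    (divPL k (T.min' hT)) ∘ₗ (LinearMap.proj (T.erase (T.min' hT))) else 0

lemma HK_apply (f : Kmod k r) (T : Finset (Fin r)) (hT : T.Nonempty) :
    HK k r f T = divPL k (T.min' hT) (f (T.erase (T.min' hT))) := by
  simp [HK, LinearMap.pi_apply, dif_pos hT]

lemma HK_apply_empty (f : Kmod k r) : HK k r f ∅ = 0 := by
  simp [HK, LinearMap.pi_apply]

end Aux2
section Aux3
variable {k : Type*} [Field k] {r : ℕ}

lemma HK_single (S : Finset (Fin r)) (a : Fin r →₀ ℕ) (c : k) (m₀ : Fin r)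
    (h1 : a m₀ ≠ 0) (h2 : ∀ j < m₀, a j = 0) (h3 : ∀ s ∈ S, m₀ < s) :
    HK k r (Pi.single S (monomial a c))
      = Pi.single (insert m₀ S) (monomial (a - Finsupp.single m₀ 1) c) := by
  classical
  have hm₀S : m₀ ∉ S := fun h => lt_irrefl m₀ (h3 m₀ h)
  funext T
  by_cases hT : T = insert m₀ S
  · subst hT
    have hne : (insert m₀ S).Nonempty := Finset.insert_nonempty _ _
    have hmin : (insert m₀ S).min' hne = m₀ := by
      refine le_antisymm (Finset.min'_le _ _ (Finset.mem_insert_self _ _)) ?_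
      refine Finset.le_min' _ _ _ fun x hx => ?_
      rcases Finset.mem_insert.mp hx with h | h
      · exact h.ge
      · exact (h3 x h).le
    rw [HK_apply _ _ hne, hmin, Finset.erase_insert hm₀S, Pi.single_eq_same,
      Pi.single_eq_same, divPL_monomial, if_pos ⟨h1, h2⟩]
  · rw [Pi.single_eq_of_ne hT]
    rcases Finset.eq_empty_or_nonempty T with h | hne
    · subst h; exact HK_apply_empty _
    rw [HK_apply _ _ hne]
    set m := T.min' hne with hm
    by_cases hTS : T.erase m = S
    · rw [hTS, Pi.single_eq_same, divPL_monomial, if_neg]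
      rintro ⟨ham, hblow⟩
      -- then m = m₀, contradiction with hT
      have : m = m₀ := by
        rcases lt_trichotomy m m₀ with h | h | h
        · exact absurd (h2 m h) ham
        · exact h
        · exact absurd (hblow m₀ h) h1
      exact hT (by rw [← hTS, ← this, Finset.insert_erase (Finset.min'_mem T hne)])
    · rw [Pi.single_eq_of_ne hTS, map_zero]

lemma HK_single_zero (S : Finset (Fin r)) (a : Fin r →₀ ℕ) (c : k)
    (h : ∀ m : Fin r, a m ≠ 0 → (∀ j < m, a j = 0) → ∃ s ∈ S, s ≤ m) :
    HK k r (Pi.single S (monomial a c)) = 0 := by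
  classical
  funext T
  rcases Finset.eq_empty_or_nonempty T with hT | hne
  · subst hT; rw [HK_apply_empty]; rfl
  rw [HK_apply _ _ hne]
  set m := T.min' hne with hm
  by_cases hTS : T.erase m = S
  · rw [hTS, Pi.single_eq_same, divPL_monomial, if_neg]
    · rfl
    rintro ⟨ham, hblow⟩
    obtain ⟨s, hsS, hsm⟩ := h m ham hblow
    have hsT : s ∈ T := Finset.mem_of_mem_erase (hTS ▸ hsS)
    have : s ≠ m := Finset.ne_of_mem_erase (hTS ▸ hsS)
    exact this (le_antisymm hsm (Finset.min'_le T s hsT))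
  · rw [Pi.single_eq_of_ne hTS, map_zero]; rfl

end Aux3
section Aux4
variable {k : Type*} [Field k] {r : ℕ}

lemma sgnX_mul_monomial (e : ℕ) (i : Fin r) (a : Fin r →₀ ℕ) (c : k) :
    ((-1 : MvPolynomial (Fin r) k) ^ e * X i) * monomial a c
      = monomial (a + Finsupp.single i 1) ((-1 : k) ^ e * c) := by
  have h1 : (-1 : MvPolynomial (Fin r) k) ^ e = C ((-1 : k) ^ e) := by
    rw [map_pow, map_neg, map_one]
  have hX : (X i : MvPolynomial (Fin r) k) * monomial a c
      = monomial (a + Finsupp.single i 1) c := by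
    rw [X, monomial_mul, one_mul, add_comm]
  rw [mul_assoc, hX, h1, C_mul_monomial]

lemma homotopy_single_B (S : Finset (Fin r)) (a : Fin r →₀ ℕ) (c : k) (m₀ : Fin r)
    (h1 : a m₀ ≠ 0) (h2 : ∀ j < m₀, a j = 0) (h3 : ∀ s ∈ S, m₀ < s) :
    koszulD k r 0 (HK k r (Pi.single S (monomial a c)))
      + HK k r (koszulD k r 0 (Pi.single S (monomial a c)))
      = Pi.single S (monomial a c)
        - Pi.single (∅ : Finset (Fin r)) (C (constantCoeff ((Pi.single S (monomial a c) : Kmod k r) (∅ : Finset (Fin r))))) := by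
  classical
  have hm₀S : m₀ ∉ S := fun h => lt_irrefl m₀ (h3 m₀ h)
  have hle : Finsupp.single m₀ 1 ≤ a := by
    rw [Finsupp.single_le_iff]
    omega
  -- the augmentation term vanishes
  have haug : (Pi.single S (monomial a c) : Kmod k r) (∅ : Finset (Fin r)) = 0 ∨
      ((Pi.single S (monomial a c) : Kmod k r) (∅ : Finset (Fin r)) = monomial a c ∧ a ≠ 0) := by
    by_cases hS : (∅ : Finset (Fin r)) = S
    · exact Or.inr ⟨by rw [hS, Pi.single_eq_same], fun h => h1 (by rw [h]; rfl)⟩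
    · exact Or.inl (Pi.single_eq_of_ne hS _)
  have haug' : (C (constantCoeff ((Pi.single S (monomial a c) : Kmod k r) (∅ : Finset (Fin r)))) : MvPolynomial (Fin r) k) = 0 := by
    rcases haug with h | ⟨h, ha⟩
    · rw [h, map_zero, map_zero]
    · rw [h, constantCoeff_monomial, if_neg ha, map_zero]
  rw [haug', Pi.single_zero, sub_zero]
  -- compute HK v
  rw [HK_single S a c m₀ h1 h2 h3, koszulD_single, koszulD_single, map_sum]
  rw [Finset.sum_insert hm₀S]
  -- the i = m₀ term gives back v
  have hterm : (Pi.single ((insert m₀ S).erase m₀)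
      ((((-1 : MvPolynomial (Fin r) k) ^ ((((insert m₀ S).erase m₀)).filter (fun j => j < m₀)).card * X m₀))
        * monomial (a - Finsupp.single m₀ 1) c) : Kmod k r) = Pi.single S (monomial a c) := by
    rw [Finset.erase_insert hm₀S, sgnX_mul_monomial, tsub_add_cancel_of_le hle]
    have : (S.filter (fun j => j < m₀)).card = 0 := by
      rw [Finset.card_eq_zero, Finset.filter_eq_empty_iff]
      intro s hs
      exact not_lt.mpr (h3 s hs).le
    rw [this, pow_zero, one_mul]
  rw [hterm]
  -- the remaining terms cancel pairwise
  have hcancel : ∀ i ∈ S,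
      (Pi.single ((insert m₀ S).erase i)
        ((((-1 : MvPolynomial (Fin r) k) ^ ((((insert m₀ S).erase i)).filter (fun j => j < i)).card * X i))
          * monomial (a - Finsupp.single m₀ 1) c) : Kmod k r)
      + HK k r (Pi.single (S.erase i)
        ((((-1 : MvPolynomial (Fin r) k) ^ (((S.erase i)).filter (fun j => j < i)).card * X i))
          * monomial a c)) = 0 := by
    intro i hi
    have him : m₀ ≠ i := (h3 i hi).ne
    have hmei : m₀ ∉ S.erase i := fun h => hm₀S (Finset.mem_of_mem_erase h)
    have hset : (insert m₀ S).erase i = insert m₀ (S.erase i) :=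
      Finset.erase_insert_of_ne him
    have hcard : (((insert m₀ S).erase i).filter (fun j => j < i)).card
        = ((S.erase i).filter (fun j => j < i)).card + 1 := by
      rw [hset, Finset.filter_insert, if_pos (h3 i hi),
        Finset.card_insert_of_notMem (fun h => hmei (Finset.mem_of_mem_filter _ h))]
    rw [sgnX_mul_monomial, sgnX_mul_monomial]
    -- compute HK of the second term
    rw [HK_single (S.erase i) _ _ m₀
      (by rw [Finsupp.add_apply, Finsupp.single_eq_of_ne' him.symm, add_zero]; exact h1)
      (fun j hj => by
        rw [Finsupp.add_apply, h2 j hj, zero_add,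
          Finsupp.single_eq_of_ne' (hj.trans (h3 i hi)).ne.symm])
      (fun s hs => h3 s (Finset.mem_of_mem_erase hs))]
    rw [hcard, hset]
    have hexp : a + Finsupp.single i 1 - Finsupp.single m₀ 1
        = a - Finsupp.single m₀ 1 + Finsupp.single i 1 := by
      rw [tsub_add_eq_add_tsub hle]
    rw [hexp, ← Pi.single_add, ← map_add (monomial _)]
    have : ((-1 : k) ^ (((S.erase i).filter (fun j => j < i)).card + 1) * c
        + (-1 : k) ^ ((S.erase i).filter (fun j => j < i)).card * c) = 0 := by
      rw [pow_succ]
      ring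
    rw [this, map_zero, Pi.single_zero]
  rw [add_assoc, ← Finset.sum_add_distrib, Finset.sum_congr rfl hcancel, Finset.sum_const_zero, add_zero]

end Aux4
section Aux5
variable {k : Type*} [Field k] {r : ℕ}

lemma homotopy_single (S : Finset (Fin r)) (a : Fin r →₀ ℕ) (c : k) :
    koszulD k r 0 (HK k r (Pi.single S (monomial a c)))
      + HK k r (koszulD k r 0 (Pi.single S (monomial a c)))
      = Pi.single S (monomial a c)
        - Pi.single (∅ : Finset (Fin r))
            (C (constantCoeff ((Pi.single S (monomial a c) : Kmod k r) (∅ : Finset (Fin r))))) := by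
  classical
  rcases Finset.eq_empty_or_nonempty S with hSe | hS
  · subst hSe
    by_cases ha : a = 0
    · -- Case A
      subst ha
      have hHK : HK k r (Pi.single (∅ : Finset (Fin r)) (monomial 0 c)) = 0 :=
        HK_single_zero _ _ _ (fun m hm _ => absurd rfl hm)
      have hD : koszulD k r 0 (Pi.single (∅ : Finset (Fin r)) (monomial 0 c)) = 0 := by
        rw [koszulD_single, Finset.sum_empty]
      rw [hHK, hD, map_zero, map_zero, zero_add]
      rw [Pi.single_eq_same, constantCoeff_monomial, if_pos rfl]
      rw [C_apply]
      exact (sub_self _).symm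
    · -- Case B with S = ∅
      obtain ⟨m₀, hm₀⟩ := Finsupp.ne_iff.mp ha
      have hsup : a.support.Nonempty := ⟨m₀, Finsupp.mem_support_iff.mpr (by simpa using hm₀)⟩
      set m := a.support.min' hsup with hm
      refine homotopy_single_B _ _ _ m (Finsupp.mem_support_iff.mp (a.support.min'_mem hsup)) ?_ ?_
      · intro j hj
        by_contra hja
        exact absurd (a.support.min'_le j (Finsupp.mem_support_iff.mpr hja)) (not_le.mpr hj)
      · intro s hs
        exact absurd hs (Finset.notMem_empty s)
  · by_cases hlow : ∀ j < S.min' hS, a j = 0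
    · -- Case C
      set m₁ := S.min' hS with hm₁
      have hm₁S : m₁ ∈ S := S.min'_mem hS
      have hHK : HK k r (Pi.single S (monomial a c)) = 0 := by
        exact HK_single_zero _ _ _ (fun m ham _ =>
          ⟨m₁, hm₁S, le_of_not_gt (fun hmm => ham (hlow m hmm))⟩)
      have hvE : (Pi.single S (monomial a c) : Kmod k r) (∅ : Finset (Fin r)) = 0 :=
        Pi.single_eq_of_ne (fun h => (Finset.nonempty_iff_ne_empty.mp hS) h.symm) _
      rw [hHK, map_zero, zero_add, hvE, map_zero, map_zero, Pi.single_zero, sub_zero]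
      rw [koszulD_single, map_sum]
      rw [Finset.sum_congr rfl (fun i (hi : i ∈ S) =>
        congrArg (HK k r) (congrArg (Pi.single (S.erase i)) (sgnX_mul_monomial _ i a c)))]
      rw [Finset.sum_eq_single_of_mem m₁ hm₁S ?_]
      · -- the m₁ term is v
        rw [HK_single (S.erase m₁) _ _ m₁
          (by rw [Finsupp.add_apply, Finsupp.single_eq_same]; omega)
          (fun j hj => by
            rw [Finsupp.add_apply, hlow j hj, zero_add, Finsupp.single_eq_of_ne' hj.ne' ])
          (fun s hs => lt_of_le_of_ne (S.min'_le s (Finset.mem_of_mem_erase hs))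
            (Ne.symm (Finset.ne_of_mem_erase hs)))]
        rw [Finset.insert_erase hm₁S, add_tsub_cancel_right]
        have h0 : ((S.erase m₁).filter (fun j => j < m₁)).card = 0 := by
          rw [Finset.card_eq_zero, Finset.filter_eq_empty_iff]
          intro s hs
          exact not_lt.mpr (S.min'_le s (Finset.mem_of_mem_erase hs))
        rw [h0, pow_zero, one_mul]
      · -- the other terms vanish
        intro i hi hne
        refine HK_single_zero _ _ _ (fun mm hmm hbl =>
          ⟨m₁, Finset.mem_erase.mpr ⟨hne.symm, hm₁S⟩, le_of_not_gt (fun hmlt => hmm ?_)⟩)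
        rw [Finsupp.add_apply, hlow mm hmlt, zero_add,
          Finsupp.single_eq_of_ne' (fun h => absurd (le_of_le_of_eq (S.min'_le i hi) h) (not_le.mpr hmlt))]
    · -- Case B with S nonempty
      push_neg at hlow
      obtain ⟨j₀, hj₀lt, hj₀⟩ := hlow
      have hsup : a.support.Nonempty := ⟨j₀, Finsupp.mem_support_iff.mpr hj₀⟩
      set m := a.support.min' hsup with hm
      have hmle : m ≤ j₀ := a.support.min'_le j₀ (Finsupp.mem_support_iff.mpr hj₀)
      refine homotopy_single_B _ _ _ m (Finsupp.mem_support_iff.mp (a.support.min'_mem hsup)) ?_ ?_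
      · intro j hj
        by_contra hja
        exact absurd (a.support.min'_le j (Finsupp.mem_support_iff.mpr hja)) (not_le.mpr hj)
      · intro s hs
        exact lt_of_le_of_lt hmle (lt_of_lt_of_le hj₀lt (S.min'_le s hs))
end Aux5
section Aux6
variable {k : Type*} [Field k] {r : ℕ}

private lemma homotopy_add (g h : Kmod k r)
    (hg : koszulD k r 0 (HK k r g) + HK k r (koszulD k r 0 g)
      = g - Pi.single (∅ : Finset (Fin r)) (C (constantCoeff (g (∅ : Finset (Fin r))))))
    (hh : koszulD k r 0 (HK k r h) + HK k r (koszulD k r 0 h)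
      = h - Pi.single (∅ : Finset (Fin r)) (C (constantCoeff (h (∅ : Finset (Fin r)))))) :
    koszulD k r 0 (HK k r (g + h)) + HK k r (koszulD k r 0 (g + h))
      = (g + h) - Pi.single (∅ : Finset (Fin r)) (C (constantCoeff ((g + h) (∅ : Finset (Fin r))))) := by
  simp only [map_add, Pi.add_apply]
  calc koszulD k r 0 (HK k r g) + koszulD k r 0 (HK k r h)
        + (HK k r (koszulD k r 0 g) + HK k r (koszulD k r 0 h))
      = (koszulD k r 0 (HK k r g) + HK k r (koszulD k r 0 g))
        + (koszulD k r 0 (HK k r h) + HK k r (koszulD k r 0 h)) := by abel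
    _ = (g - Pi.single (∅ : Finset (Fin r)) (C (constantCoeff (g (∅ : Finset (Fin r))))))
        + (h - Pi.single (∅ : Finset (Fin r)) (C (constantCoeff (h (∅ : Finset (Fin r)))))) := by
        rw [hg, hh]
    _ = g + h - Pi.single (∅ : Finset (Fin r))
          (C (constantCoeff (g (∅ : Finset (Fin r)))) + C (constantCoeff (h (∅ : Finset (Fin r))))) := by
        rw [Pi.single_add]; abel

lemma homotopy (f : Kmod k r) :
    koszulD k r 0 (HK k r f) + HK k r (koszulD k r 0 f)
      = f - Pi.single (∅ : Finset (Fin r)) (C (constantCoeff (f (∅ : Finset (Fin r))))) := by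
  have hsingle : ∀ (S : Finset (Fin r)) (p : MvPolynomial (Fin r) k),
      koszulD k r 0 (HK k r (Pi.single S p)) + HK k r (koszulD k r 0 (Pi.single S p))
        = Pi.single S p - Pi.single (∅ : Finset (Fin r))
            (C (constantCoeff ((Pi.single S p : Kmod k r) (∅ : Finset (Fin r))))) := by
    intro S p
    induction p using MvPolynomial.induction_on' with
    | monomial a c => exact homotopy_single S a c
    | add p q hp hq =>
      have e : (Pi.single S (p + q) : Kmod k r) = Pi.single S p + Pi.single S q := by
        funext T
        by_cases hT : T = S
        · subst hT; simp
        · simp [Pi.single_eq_of_ne hT]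
      rw [e]
      exact homotopy_add _ _ hp hq
  have key : ∀ (s : Finset (Finset (Fin r))) (f : Kmod k r),
      koszulD k r 0 (HK k r (∑ S ∈ s, Pi.single S (f S)))
        + HK k r (koszulD k r 0 (∑ S ∈ s, Pi.single S (f S)))
        = (∑ S ∈ s, Pi.single S (f S)) - Pi.single (∅ : Finset (Fin r))
            (C (constantCoeff ((∑ S ∈ s, Pi.single S (f S) : Kmod k r) (∅ : Finset (Fin r))))) := by
    intro s f
    induction s using Finset.induction_on with
    | empty => simp
    | insert _ _ hni ih =>
      rw [Finset.sum_insert hni]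
      exact homotopy_add _ _ (hsingle _ _) ih
  have := key Finset.univ f
  rwa [Finset.univ_sum_single f] at this

end Aux6
section Aux7
variable {k : Type*} [Field k] {r : ℕ}

lemma KFil_mono {i j : ℕ} (h : i ≤ j) : KFil k r i ≤ KFil k r j :=
  Submodule.span_mono (fun f ⟨S, hS, hf⟩ => ⟨S, hS.trans h, hf⟩)

lemma apply_eq_zero_of_mem_KFil {i : ℕ} {f : Kmod k r} (hf : f ∈ KFil k r i)
    {S : Finset (Fin r)} (hS : i ≤ S.card) : f S = 0 := by
  induction hf using Submodule.span_induction with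
  | mem g hg =>
    obtain ⟨T, hT, rfl⟩ := hg
    have hTS : T ≠ S := fun h => by subst h; omega
    exact Pi.single_eq_of_ne (Ne.symm hTS) _
  | zero => rfl
  | add g h _ _ hg hh => rw [Pi.add_apply, hg, hh, add_zero]
  | smul q g _ hg => rw [Pi.smul_apply, hg, smul_zero]

lemma mem_KFil {i : ℕ} {f : Kmod k r} (hf : ∀ S : Finset (Fin r), i ≤ S.card → f S = 0) :
    f ∈ KFil k r i := by
  classical
  rw [← Finset.univ_sum_single f]
  refine Submodule.sum_mem _ fun S _ => ?_
  by_cases hS : S.card + 1 ≤ i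
  · have : (Pi.single S (f S) : Kmod k r) = f S • eK k S := by
      funext T
      by_cases hT : T = S
      · subst hT; simp [eK]
      · simp [Pi.single_eq_of_ne hT, eK, Pi.single_eq_of_ne hT]
    rw [this]
    exact Submodule.smul_mem _ _ (Submodule.subset_span ⟨S, hS, rfl⟩)
  · rw [hf S (by omega), Pi.single_zero]
    exact Submodule.zero_mem _

lemma koszulD_mem_KFil {i : ℕ} {f : Kmod k r} (hf : f ∈ KFil k r (i + 1)) :
    koszulD k r 0 f ∈ KFil k r i := by
  refine mem_KFil fun S hS => ?_
  rw [koszulD_apply]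
  refine Finset.sum_eq_zero fun j hj => ?_
  rw [apply_eq_zero_of_mem_KFil hf (S := insert j S) ?_, mul_zero]
  rw [Finset.card_insert_of_notMem (Finset.mem_compl.mp hj)]
  omega

lemma HK_mem_KFil {i : ℕ} {f : Kmod k r} (hf : f ∈ KFil k r i) :
    HK k r f ∈ KFil k r (i + 1) := by
  refine mem_KFil fun S hS => ?_
  rcases Finset.eq_empty_or_nonempty S with h | hne
  · subst h
    rw [HK_apply_empty]
  · rw [HK_apply _ _ hne,
      apply_eq_zero_of_mem_KFil hf (S := S.erase (S.min' hne)) ?_, map_zero]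
    rw [Finset.card_erase_of_mem (S.min'_mem hne)]
    omega

lemma single_empty_mem_KFil {i : ℕ} (hi : 1 ≤ i) (q : MvPolynomial (Fin r) k) :
    (Pi.single (∅ : Finset (Fin r)) q : Kmod k r) ∈ KFil k r i := by
  refine mem_KFil fun S hS => ?_
  refine Pi.single_eq_of_ne (fun h => ?_) _
  subst h
  simp at hS
  omega

lemma koszulD_single_empty (q : MvPolynomial (Fin r) k) :
    koszulD k r 0 (Pi.single (∅ : Finset (Fin r)) q : Kmod k r) = 0 := by
  rw [koszulD_single, Finset.sum_empty]

/-- Exactness with augmentation: cycles in `KFil i` with vanishing constant term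
are boundaries from `KFil (i+1)`. -/
lemma koszulD_exact {i : ℕ} {y : Kmod k r} (hy : y ∈ KFil k r i)
    (hcy : koszulD k r 0 y = 0) (h0 : constantCoeff (y (∅ : Finset (Fin r))) = 0) :
    koszulD k r 0 (HK k r y) = y ∧ HK k r y ∈ KFil k r (i + 1) := by
  constructor
  · have := homotopy y
    rw [hcy, map_zero, add_zero, h0, map_zero, Pi.single_zero, sub_zero] at this
    exact this
  · exact HK_mem_KFil hy

end Aux7
/-- `k` as an `R = k[t₁,…,t_r]`-module via the augmentation `tᵢ ↦ 0`. -/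
def Raug (k : Type*) [Field k] (r : ℕ) : Type _ := k

noncomputable instance {k : Type*} [Field k] {r : ℕ} : AddCommGroup (Raug k r) :=
  inferInstanceAs (AddCommGroup k)

noncomputable instance {k : Type*} [Field k] {r : ℕ} : Module (Rp k r) (Raug k r) :=
  Module.compHom k (constantCoeff : Rp k r →+* k)

/-- Identity map `k → Raug k r`. -/
def Raug.of (k : Type*) [Field k] (r : ℕ) (c : k) : Raug k r := c

/-- Identity map `Raug k r → k`. -/
def Raug.out {k : Type*} [Field k] {r : ℕ} (c : Raug k r) : k := c

lemma Raug_smul {k : Type*} [Field k] {r : ℕ} (q : Rp k r) (c : Raug k r) :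
    q • c = Raug.of k r (constantCoeff q * Raug.out c) := rfl

@[simp] lemma Raug.out_of {k : Type*} [Field k] {r : ℕ} (c : k) :
    Raug.out (Raug.of k r c) = c := rfl

/-- The augmentation of the Koszul complex, as an `R`-linear map to `Raug`. -/
noncomputable def augK (k : Type*) [Field k] (r : ℕ) : Kmod k r →ₗ[Rp k r] Raug k r where
  toFun f := Raug.of k r (constantCoeff (f (∅ : Finset (Fin r))))
  map_add' f g := by
    show Raug.of k r (constantCoeff ((f + g) (∅ : Finset (Fin r)))) = _
    rw [Pi.add_apply, map_add]
    rfl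
  map_smul' q f := by
    show Raug.of k r (constantCoeff ((q • f) (∅ : Finset (Fin r)))) = _
    rw [Pi.smul_apply, smul_eq_mul, map_mul]
    rfl

lemma augK_apply {k : Type*} [Field k] {r : ℕ} (f : Kmod k r) :
    augK k r f = Raug.of k r (constantCoeff (f (∅ : Finset (Fin r)))) := rfl


theorem statement15 (k : Type*) [Field k] (r : ℕ)
    (M : Type*) [AddCommGroup M] [Module k M] [Module (Rp k r) M]
    [IsScalarTower k (Rp k r) M] [Module.Free (Rp k r) M]
    -- the differential
    (D : M →ₗ[Rp k r] M) (hDD : D ∘ₗ D = 0)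
    -- the filtration 0 = F₀ ⊂ F₁ ⊂ … ⊂ F_n = C̃
    (F : ℕ → Submodule (Rp k r) M) (n : ℕ)
    (hF0 : F 0 = ⊥) (hFtop : ∀ i, n ≤ i → F i = ⊤)
    (hFlt : ∀ i, i < n → F i < F (i + 1))
    -- by free differential submodules that are R-module direct summands
    (hfree : ∀ i, Module.Free (Rp k r) (F i))
    (hcompl : ∀ i, ∃ G : Submodule (Rp k r) M, IsCompl (F i) G)
    (hdF : ∀ i, (F (i + 1)).map D ≤ F i)
    -- the augmentation ε : C̃ → k, a morphism of differential modules (trivial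
    -- differential on k, R acting on k through tᵢ ↦ 0), surjective on F₁
    (ε : M →ₗ[k] k)
    (hεd : ε ∘ₗ (D.restrictScalars k) = 0)
    (hεsl : ∀ (q : Rp k r) (z : M), ε (q • z) = constantCoeff q * ε z)
    (hεsurj : ∀ c : k, ∃ z ∈ F 1, ε z = c) :
    ∃ β : M →ₗ[Rp k r] Kmod k r,
      -- β is a morphism of differential R-modules …
      β ∘ₗ D = koszulD k r 0 ∘ₗ β ∧
      -- … commuting with the augmentations …
      (∀ z : M, constantCoeff (β z ∅) = ε z) ∧
      -- … and preserving the filtrations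
      (∀ i, (F i).map β ≤ KFil k r i) := by
  classical
  let εR : M →ₗ[Rp k r] Raug k r :=
    { toFun := fun z => Raug.of k r (ε z)
      map_add' := fun x y => by show Raug.of k r (ε (x + y)) = _; rw [map_add]; rfl
      map_smul' := fun q z => by
        show Raug.of k r (ε (q • z)) = q • Raug.of k r (ε z)
        rw [hεsl, Raug_smul, Raug.out_of] }
  have hFmono : Monotone F := monotone_nat_of_le_succ (fun i => by
    rcases lt_or_ge i n with h | h
    · exact (hFlt i h).le
    · rw [hFtop i h, hFtop (i + 1) (h.trans (Nat.le_succ i))])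
  have hεD : ∀ z : M, ε (D z) = 0 := fun z => LinearMap.ext_iff.mp hεd z
  have hDD' : ∀ z : M, D (D z) = 0 := fun z => LinearMap.ext_iff.mp hDD z
  have main : ∀ i : ℕ, ∃ β : M →ₗ[Rp k r] Kmod k r,
      (∀ z ∈ F i, β (D z) = koszulD k r 0 (β z)) ∧
      (∀ z ∈ F i, constantCoeff (β z (∅ : Finset (Fin r))) = ε z) ∧
      (∀ j : ℕ, ∀ z ∈ F i, z ∈ F j → β z ∈ KFil k r j) := by
    intro i
    induction i with
    | zero =>
      refine ⟨0, fun z hz => by simp, fun z hz => ?_, fun j z hz _ => ?_⟩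
      · rw [hF0, Submodule.mem_bot] at hz
        subst hz
        simp
      · rw [LinearMap.zero_apply]
        exact Submodule.zero_mem _
    | succ i ih =>
      obtain ⟨β, ih1, ih2, ih3⟩ := ih
      obtain ⟨G, hG⟩ := hcompl i
      obtain ⟨G', hG'⟩ := hcompl (i + 1)
      set π : M →ₗ[Rp k r] M := (F i).subtype ∘ₗ (F i).linearProjOfIsCompl G hG with hπdef
      have hπleft : ∀ z, z ∈ F i → π z = z := fun z hz =>
        congrArg Subtype.val (Submodule.linearProjOfIsCompl_apply_left hG ⟨z, hz⟩)
      have hπright : ∀ z, z ∈ G → π z = 0 := fun z hz =>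
        congrArg Subtype.val (Submodule.linearProjOfIsCompl_apply_right hG ⟨z, hz⟩)
      have hπmem : ∀ z, π z ∈ F i := fun z => ((F i).linearProjOfIsCompl G hG z).2
      have hwG : ∀ z : M, z - π z ∈ G := by
        intro z
        have hzt : z ∈ F i ⊔ G := by rw [hG.sup_eq_top]; exact Submodule.mem_top
        obtain ⟨u, hu, v, hv, huv⟩ := Submodule.mem_sup.mp hzt
        have hπz : π z = u := by
          rw [← huv, map_add, hπleft u hu, hπright v hv, add_zero]
        rw [hπz, ← huv, add_sub_cancel_left]
        exact hv
      haveI : Module.Free (Rp k r) (F (i + 1)) := hfree (i + 1)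
      have hΦmem1 : ∀ x : KFil k r (i + 1),
          (koszulD k r 0 ∘ₗ (KFil k r (i + 1)).subtype) x ∈ KFil k r i :=
        fun x => koszulD_mem_KFil x.2
      set Φ : (KFil k r (i + 1)) →ₗ[Rp k r] (KFil k r i × Raug k r) :=
        LinearMap.prod
          (LinearMap.codRestrict (KFil k r i)
            (koszulD k r 0 ∘ₗ (KFil k r (i + 1)).subtype) hΦmem1)
          (augK k r ∘ₗ (KFil k r (i + 1)).subtype) with hΦdef
      set ρ : (F (i + 1)) →ₗ[Rp k r] M :=
        (F (i + 1)).subtype - π ∘ₗ (F (i + 1)).subtype with hρdef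
      have hρ_apply : ∀ z : F (i + 1), ρ z = (z : M) - π (z : M) := fun z => rfl
      have hρF : ∀ z : F (i + 1), ρ z ∈ F (i + 1) := fun z =>
        Submodule.sub_mem _ z.2 (hFmono (Nat.le_succ i) (hπmem z))
      have hρG : ∀ z : F (i + 1), ρ z ∈ G := fun z => hwG z
      have hρD : ∀ z : F (i + 1), D (ρ z) ∈ F i := fun z =>
        hdF i (Submodule.mem_map_of_mem (hρF z))
      set Ψ : (F (i + 1)) →ₗ[Rp k r] (KFil k r i × Raug k r) :=
        LinearMap.prod
          (LinearMap.codRestrict (KFil k r i) (β ∘ₗ D ∘ₗ ρ)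
            (fun z => ih3 i (D (ρ z)) (hρD z) (hρD z)))
          (εR ∘ₗ ρ) with hΨdef
      have hrange : ∀ z : F (i + 1), Ψ z ∈ LinearMap.range Φ := by
        intro z
        have hDw : D (ρ z) ∈ F i := hρD z
        have hy0 : koszulD k r 0 (β (D (ρ z))) = 0 := by
          rw [← ih1 (D (ρ z)) hDw, hDD' (ρ z), map_zero]
        have hyc : constantCoeff (β (D (ρ z)) (∅ : Finset (Fin r))) = 0 := by
          rw [ih2 (D (ρ z)) hDw]
          exact hεD (ρ z)
        have hymem : β (D (ρ z)) ∈ KFil k r i := ih3 i (D (ρ z)) hDw hDw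
        obtain ⟨hx1, hx2⟩ := koszulD_exact hymem hy0 hyc
        set x : Kmod k r := HK k r (β (D (ρ z))) + Pi.single (∅ : Finset (Fin r))
          (C (ε (ρ z) - constantCoeff (HK k r (β (D (ρ z))) (∅ : Finset (Fin r))))) with hxdef
        have hxmem : x ∈ KFil k r (i + 1) :=
          Submodule.add_mem _ hx2 (single_empty_mem_KFil (Nat.succ_le_succ (Nat.zero_le i)) _)
        refine ⟨⟨x, hxmem⟩, ?_⟩
        have hfst : koszulD k r 0 x = β (D (ρ z)) := by
          rw [hxdef, map_add, koszulD_single_empty, add_zero, hx1]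
        have hsnd : augK k r x = Raug.of k r (ε (ρ z)) := by
          rw [augK_apply, hxdef, Pi.add_apply, Pi.single_eq_same, map_add, constantCoeff_C]
          congr 1
          ring
        refine Prod.ext ?_ ?_
        · exact Subtype.ext hfst
        · exact hsnd
      obtain ⟨h, hh⟩ := Module.projective_lifting_property Φ.rangeRestrict
        (Ψ.codRestrict (LinearMap.range Φ) hrange) (LinearMap.surjective_rangeRestrict Φ)
      have hΦh : ∀ z : F (i + 1), Φ (h z) = Ψ z := fun z =>
        congrArg Subtype.val (LinearMap.ext_iff.mp hh z)
      set γ : M →ₗ[Rp k r] Kmod k r :=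
        (KFil k r (i + 1)).subtype ∘ₗ h ∘ₗ (F (i + 1)).linearProjOfIsCompl G' hG' with hγdef
      have hγ : ∀ z (hz : z ∈ F (i + 1)), γ z = (h ⟨z, hz⟩ : Kmod k r) := fun z hz =>
        congrArg (fun t => ((h t : KFil k r (i + 1)) : Kmod k r))
          (Submodule.linearProjOfIsCompl_apply_left hG' ⟨z, hz⟩)
      -- properties of γ on W = F (i+1) ∩ G
      have hργ : ∀ (z : M) (hz : z ∈ F (i + 1)), z ∈ G → ρ ⟨z, hz⟩ = z := by
        intro z hz hzG
        rw [hρ_apply, hπright z hzG, sub_zero]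
      have hγD : ∀ (z : M) (hz : z ∈ F (i + 1)), z ∈ G →
          koszulD k r 0 (γ z) = β (D z) := by
        intro z hz hzG
        have h1 := congrArg (fun p => ((Prod.fst p : KFil k r i) : Kmod k r)) (hΦh ⟨z, hz⟩)
        simp only [hΦdef, hΨdef, LinearMap.prod_apply, Function.prod_apply,
          LinearMap.codRestrict_apply, LinearMap.comp_apply, Submodule.coe_subtype] at h1
        rw [hγ z hz, h1, hργ z hz hzG]
      have hγaug : ∀ (z : M) (hz : z ∈ F (i + 1)), z ∈ G →
          constantCoeff (γ z (∅ : Finset (Fin r))) = ε z := by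
        intro z hz hzG
        have h2 := congrArg Prod.snd (hΦh ⟨z, hz⟩)
        simp only [hΦdef, hΨdef, LinearMap.prod_apply, Function.prod_apply,
          LinearMap.comp_apply, Submodule.coe_subtype] at h2
        rw [hργ z hz hzG] at h2
        have h3 : Raug.out (augK k r ((h ⟨z, hz⟩ : KFil k r (i + 1)) : Kmod k r))
            = Raug.out (εR z) := congrArg Raug.out h2
        rw [hγ z hz]
        exact h3
      have hγKF : ∀ (z : M) (hz : z ∈ F (i + 1)), γ z ∈ KFil k r (i + 1) := by
        intro z hz
        rw [hγ z hz]
        exact (h ⟨z, hz⟩).2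
      -- the extension
      set β' : M →ₗ[Rp k r] Kmod k r := β ∘ₗ π + γ ∘ₗ (LinearMap.id - π) with hβ'def
      have hβ'apply : ∀ z : M, β' z = β (π z) + γ (z - π z) := fun z => rfl
      have hβ'Fi : ∀ z, z ∈ F i → β' z = β z := by
        intro z hz
        rw [hβ'apply, hπleft z hz, sub_self, map_zero, add_zero]
      have hwmem : ∀ z, z ∈ F (i + 1) → (z - π z ∈ F (i + 1) ∧ z - π z ∈ G) := by
        intro z hz
        exact ⟨Submodule.sub_mem _ hz (hFmono (Nat.le_succ i) (hπmem z)), hwG z⟩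
      refine ⟨β', fun z hz => ?_, fun z hz => ?_, fun j z hz hzj => ?_⟩
      · -- differential
        have hDz : D z ∈ F i := hdF i (Submodule.mem_map_of_mem hz)
        obtain ⟨hw1, hw2⟩ := hwmem z hz
        rw [hβ'Fi (D z) hDz, hβ'apply, map_add, ← ih1 (π z) (hπmem z), hγD _ hw1 hw2,
          ← map_add β, ← map_add D, add_sub_cancel]
      · -- augmentation
        obtain ⟨hw1, hw2⟩ := hwmem z hz
        rw [hβ'apply, Pi.add_apply, map_add, ih2 (π z) (hπmem z), hγaug _ hw1 hw2,
          ← map_add ε, add_sub_cancel]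
      · -- filtration
        rcases le_or_gt j i with hj | hj
        · have hzFi : z ∈ F i := hFmono hj hzj
          rw [hβ'Fi z hzFi]
          exact ih3 j z hzFi hzj
        · refine KFil_mono (k := k) (r := r) hj ?_
          obtain ⟨hw1, hw2⟩ := hwmem z hz
          rw [hβ'apply]
          refine Submodule.add_mem _ ?_ (hγKF _ hw1)
          exact KFil_mono (Nat.le_succ i) (ih3 i (π z) (hπmem z) (hπmem z))
  obtain ⟨β, h1, h2, h3⟩ := main n
  refine ⟨β, ?_, ?_, ?_⟩
  · apply LinearMap.ext
    intro z
    have hz : z ∈ F n := by rw [hFtop n le_rfl]; exact Submodule.mem_top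
    exact h1 z hz
  · intro z
    have hz : z ∈ F n := by rw [hFtop n le_rfl]; exact Submodule.mem_top
    exact h2 z hz
  · intro i
    rintro _ ⟨z, hz, rfl⟩
    have hzn : z ∈ F n := by rw [hFtop n le_rfl]; exact Submodule.mem_top
    exact h3 i z hzn hz
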